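/- Let (a,b) be a fictitious-play trajectory. Then for every t ≥ 0: (a) if round t is not axis-crossing then ρ_{t+1} = ρ_t; (b) ρ_t ≤ ρ_{t+1} ≤ ρ_t + 2; (c) ρ_0 = 0; and (d) ρ_t ≥ 1 for every t ≥ 1. In particular the radius ρ_t is non-decreasing in t. -/
import Mathlib


open MeasureTheory

/-- Bob's choice of the left or right piece. -/
inductive Choice
  | L
  | R
deriving DecidableEq

/-- The cumulative valuation `V(x) = ∫_0^x v`. -/
noncomputable def cumul (v : ℝ → ℝ) (x : ℝ) : ℝ := ∫ y in (0:ℝ)..x, v y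

/-- `v` is an integrable value density on `[0,1]`, bounded between `lo` and `hi`,
integrating to `1`. -/
def IsDensity (lo hi : ℝ) (v : ℝ → ℝ) : Prop :=
  IntervalIntegrable v volume 0 1 ∧
  (∀ x ∈ Set.Icc (0:ℝ) 1, lo ≤ v x ∧ v x ≤ hi) ∧
  (∫ y in (0:ℝ)..1, v y) = 1

/-- Alice's round-`t` utility: if Bob picks `L` she gets `[a_t,1]`, else `[0,a_t]`. -/
noncomputable def uA (vA : ℝ → ℝ) (a : ℕ → ℝ) (b : ℕ → Choice) (t : ℕ) : ℝ :=
  if b t = Choice.L then 1 - cumul vA (a t) else cumul vA (a t)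

/-- Bob's round-`t` utility: if he picks `L` he gets `[0,a_t]`, else `[a_t,1]`. -/
noncomputable def uB (vB : ℝ → ℝ) (a : ℕ → ℝ) (b : ℕ → Choice) (t : ℕ) : ℝ :=
  if b t = Choice.L then cumul vB (a t) else 1 - cumul vB (a t)

/-- `α_t = r_t − ℓ_t`: number of `R` choices minus number of `L` choices up to round `t`. -/
noncomputable def alphaFP (b : ℕ → Choice) (t : ℕ) : ℝ :=
  ∑ i ∈ Finset.Icc 1 t, (if b i = Choice.R then (1:ℝ) else -1)

/-- `β_t = Σ_{i=1}^t (2 V_B(a_i) − 1)`. -/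
noncomputable def betaFP (vB : ℝ → ℝ) (a : ℕ → ℝ) (t : ℕ) : ℝ :=
  ∑ i ∈ Finset.Icc 1 t, (2 * cumul vB (a i) - 1)

/-- The radius `ρ_t = |α_t| + |β_t|`. -/
noncomputable def rhoFP (vB : ℝ → ℝ) (a : ℕ → ℝ) (b : ℕ → Choice) (t : ℕ) : ℝ :=
  |alphaFP b t| + |betaFP vB a t|

/-- `(a,b)` is a fictitious-play trajectory. -/
def IsFictitiousPlay (vB : ℝ → ℝ) (a : ℕ → ℝ) (b : ℕ → Choice) : Prop :=
  ∀ t : ℕ,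
    (0 < alphaFP b t → a (t+1) = 1) ∧
    (alphaFP b t < 0 → a (t+1) = 0) ∧
    (0 < betaFP vB a t → b (t+1) = Choice.L) ∧
    (betaFP vB a t < 0 → b (t+1) = Choice.R)

/-- Round `t` is axis-crossing. -/
def AxisCrossing (vB : ℝ → ℝ) (a : ℕ → ℝ) (b : ℕ → Choice) (t : ℕ) : Prop :=
  alphaFP b t = 0 ∨
  (betaFP vB a t ≤ 0 ∧ 0 < betaFP vB a (t+1)) ∨
  (0 ≤ betaFP vB a t ∧ betaFP vB a (t+1) < 0)

section AuxFP

lemma cumul_bounds' {δ Δ : ℝ} (hδ : 0 ≤ δ) {v : ℝ → ℝ} (hv : IsDensity δ Δ v)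
    {x : ℝ} (hx : x ∈ Set.Icc (0:ℝ) 1) :
    0 ≤ cumul v x ∧ cumul v x ≤ 1 := by
  obtain ⟨hint, hbd, hone⟩ := hv
  have h1 : IntervalIntegrable v volume 0 x :=
    hint.mono_set (by
      rw [Set.uIcc_of_le hx.1, Set.uIcc_of_le (by norm_num : (0:ℝ) ≤ 1)]
      exact Set.Icc_subset_Icc le_rfl hx.2)
  have h2 : IntervalIntegrable v volume x 1 :=
    hint.mono_set (by
      rw [Set.uIcc_of_le hx.2, Set.uIcc_of_le (by norm_num : (0:ℝ) ≤ 1)]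
      exact Set.Icc_subset_Icc hx.1 le_rfl)
  have hn1 : 0 ≤ ∫ y in (0:ℝ)..x, v y :=
    intervalIntegral.integral_nonneg hx.1
      (fun u hu => le_trans hδ (hbd u ⟨hu.1, le_trans hu.2 hx.2⟩).1)
  have hn2 : 0 ≤ ∫ y in x..(1:ℝ), v y :=
    intervalIntegral.integral_nonneg hx.2
      (fun u hu => le_trans hδ (hbd u ⟨le_trans hx.1 hu.1, hu.2⟩).1)
  have hadd := intervalIntegral.integral_add_adjacent_intervals h1 h2
  rw [hone] at hadd
  exact ⟨hn1, by unfold cumul; linarith⟩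

lemma alpha_succ' (b : ℕ → Choice) (t : ℕ) :
    alphaFP b (t+1) = alphaFP b t + (if b (t+1) = Choice.R then (1:ℝ) else -1) := by
  unfold alphaFP
  rw [Finset.sum_Icc_succ_top (by omega : 1 ≤ t+1)]

lemma beta_succ' (vB : ℝ → ℝ) (a : ℕ → ℝ) (t : ℕ) :
    betaFP vB a (t+1) = betaFP vB a t + (2 * cumul vB (a (t+1)) - 1) := by
  unfold betaFP
  rw [Finset.sum_Icc_succ_top (by omega : 1 ≤ t+1)]

lemma alpha_int' (b : ℕ → Choice) (t : ℕ) : ∃ n : ℤ, alphaFP b t = n := by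
  induction t with
  | zero => exact ⟨0, by simp [alphaFP]⟩
  | succ t ih =>
    obtain ⟨n, hn⟩ := ih
    by_cases h : b (t+1) = Choice.R
    · exact ⟨n+1, by rw [alpha_succ', hn, if_pos h]; push_cast; ring⟩
    · exact ⟨n-1, by rw [alpha_succ', hn, if_neg h]; push_cast; ring⟩

lemma alpha_ge_one' {b : ℕ → Choice} {t : ℕ} (h : 0 < alphaFP b t) : 1 ≤ alphaFP b t := by
  obtain ⟨n, hn⟩ := alpha_int' b t
  rw [hn] at h ⊢
  have h2 : 0 < n := by exact_mod_cast h
  exact_mod_cast h2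

lemma alpha_le_neg_one' {b : ℕ → Choice} {t : ℕ} (h : alphaFP b t < 0) :
    alphaFP b t ≤ -1 := by
  obtain ⟨n, hn⟩ := alpha_int' b t
  rw [hn] at h ⊢
  have h2 : n < 0 := by exact_mod_cast h
  have h3 : n ≤ -1 := by omega
  exact_mod_cast h3

lemma step_data' {δ Δ : ℝ} (hδ : 0 < δ) {vB : ℝ → ℝ} {a : ℕ → ℝ} {b : ℕ → Choice}
    (hB : IsDensity δ Δ vB)
    (ha : ∀ t : ℕ, 1 ≤ t → a t ∈ Set.Icc (0:ℝ) 1)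
    (hfp : IsFictitiousPlay vB a b) (t : ℕ) :
    (-1 ≤ 2 * cumul vB (a (t+1)) - 1) ∧ (2 * cumul vB (a (t+1)) - 1 ≤ 1) ∧
    (0 < alphaFP b t → 2 * cumul vB (a (t+1)) - 1 = 1) ∧
    (alphaFP b t < 0 → 2 * cumul vB (a (t+1)) - 1 = -1) ∧
    (0 < betaFP vB a t → (if b (t+1) = Choice.R then (1:ℝ) else -1) = -1) ∧
    (betaFP vB a t < 0 → (if b (t+1) = Choice.R then (1:ℝ) else -1) = 1) := by
  have hc := cumul_bounds' hδ.le hB (ha (t+1) (by omega))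
  refine ⟨by linarith [hc.1], by linarith [hc.2], ?_, ?_, ?_, ?_⟩
  · intro h
    have h1 := (hfp t).1 h
    rw [h1]
    have : cumul vB 1 = 1 := hB.2.2
    rw [this]; ring
  · intro h
    have h1 := (hfp t).2.1 h
    rw [h1]
    have : cumul vB 0 = 0 := intervalIntegral.integral_same
    rw [this]; ring
  · intro h
    have h1 := (hfp t).2.2.1 h
    simp [h1]
  · intro h
    have h1 := (hfp t).2.2.2 h
    simp [h1]

set_option maxHeartbeats 2000000 in
lemma rho_step' {δ Δ : ℝ} (hδ : 0 < δ) {vB : ℝ → ℝ} {a : ℕ → ℝ} {b : ℕ → Choice}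
    (hB : IsDensity δ Δ vB)
    (ha : ∀ t : ℕ, 1 ≤ t → a t ∈ Set.Icc (0:ℝ) 1)
    (hfp : IsFictitiousPlay vB a b) (t : ℕ) :
    rhoFP vB a b t ≤ rhoFP vB a b (t+1) := by
  obtain ⟨hd1, hd2, hdp, hdn, hsp, hsn⟩ := step_data' hδ hB ha hfp t
  have hs : (if b (t+1) = Choice.R then (1:ℝ) else -1) = 1 ∨
      (if b (t+1) = Choice.R then (1:ℝ) else -1) = -1 := by
    by_cases h : b (t+1) = Choice.R
    · left; rw [if_pos h]
    · right; rw [if_neg h]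
  unfold rhoFP
  rw [alpha_succ' b t, beta_succ' vB a t]
  rcases lt_trichotomy (alphaFP b t) 0 with hA|hA|hA <;>
  rcases lt_trichotomy (betaFP vB a t) 0 with hβ|hβ|hβ <;>
  · try have hx1 := hdp (by assumption)
    try have hx2 := hdn (by assumption)
    try have hx3 := hsp (by assumption)
    try have hx4 := hsn (by assumption)
    try have hx5 := alpha_ge_one' (b := b) (t := t) (by assumption)
    try have hx6 := alpha_le_neg_one' (b := b) (t := t) (by assumption)
    rcases hs with hs|hs <;>
    rcases abs_cases (alphaFP b t + (if b (t+1) = Choice.R then (1:ℝ) else -1)) with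
      ⟨e1, _⟩|⟨e1, _⟩ <;>
    rcases abs_cases (betaFP vB a t + (2 * cumul vB (a (t+1)) - 1)) with ⟨e2, _⟩|⟨e2, _⟩ <;>
    rcases abs_cases (alphaFP b t) with ⟨e3, _⟩|⟨e3, _⟩ <;>
    rcases abs_cases (betaFP vB a t) with ⟨e4, _⟩|⟨e4, _⟩ <;>
    linarith

set_option maxHeartbeats 2000000 in
lemma rho_eq' {δ Δ : ℝ} (hδ : 0 < δ) {vB : ℝ → ℝ} {a : ℕ → ℝ} {b : ℕ → Choice}
    (hB : IsDensity δ Δ vB)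
    (ha : ∀ t : ℕ, 1 ≤ t → a t ∈ Set.Icc (0:ℝ) 1)
    (hfp : IsFictitiousPlay vB a b) (t : ℕ)
    (hnc : ¬ AxisCrossing vB a b t) :
    rhoFP vB a b (t+1) = rhoFP vB a b t := by
  obtain ⟨hd1, hd2, hdp, hdn, hsp, hsn⟩ := step_data' hδ hB ha hfp t
  have hs : (if b (t+1) = Choice.R then (1:ℝ) else -1) = 1 ∨
      (if b (t+1) = Choice.R then (1:ℝ) else -1) = -1 := by
    by_cases h : b (t+1) = Choice.R
    · left; rw [if_pos h]
    · right; rw [if_neg h]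
  unfold AxisCrossing at hnc
  push_neg at hnc
  rw [beta_succ' vB a t] at hnc
  obtain ⟨hn1, hn2, hn3⟩ := hnc
  unfold rhoFP
  rw [alpha_succ' b t, beta_succ' vB a t]
  rcases lt_trichotomy (alphaFP b t) 0 with hA|hA|hA
  · try have hy1 := hn2 (by linarith : betaFP vB a t ≤ 0)
    try have hy2 := hn3 (by linarith : 0 ≤ betaFP vB a t)
    have hx2 := hdn hA
    have hx6 := alpha_le_neg_one' hA
    rcases lt_trichotomy (betaFP vB a t) 0 with hβ|hβ|hβ <;>
    · try have hy1 := hn2 (by linarith : betaFP vB a t ≤ 0)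
      try have hy2 := hn3 (by linarith : 0 ≤ betaFP vB a t)
      try have hx3 := hsp (by assumption)
      try have hx4 := hsn (by assumption)
      rcases hs with hs|hs <;>
      rcases abs_cases (alphaFP b t + (if b (t+1) = Choice.R then (1:ℝ) else -1)) with
        ⟨e1, _⟩|⟨e1, _⟩ <;>
      rcases abs_cases (betaFP vB a t + (2 * cumul vB (a (t+1)) - 1)) with ⟨e2, _⟩|⟨e2, _⟩ <;>
      rcases abs_cases (alphaFP b t) with ⟨e3, _⟩|⟨e3, _⟩ <;>
      rcases abs_cases (betaFP vB a t) with ⟨e4, _⟩|⟨e4, _⟩ <;>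
      linarith
  · exact absurd hA hn1
  · have hx1 := hdp hA
    have hx5 := alpha_ge_one' hA
    rcases lt_trichotomy (betaFP vB a t) 0 with hβ|hβ|hβ <;>
    · try have hy1 := hn2 (by linarith : betaFP vB a t ≤ 0)
      try have hy2 := hn3 (by linarith : 0 ≤ betaFP vB a t)
      try have hx3 := hsp (by assumption)
      try have hx4 := hsn (by assumption)
      rcases hs with hs|hs <;>
      rcases abs_cases (alphaFP b t + (if b (t+1) = Choice.R then (1:ℝ) else -1)) with
        ⟨e1, _⟩|⟨e1, _⟩ <;>
      rcases abs_cases (betaFP vB a t + (2 * cumul vB (a (t+1)) - 1)) with ⟨e2, _⟩|⟨e2, _⟩ <;>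
      rcases abs_cases (alphaFP b t) with ⟨e3, _⟩|⟨e3, _⟩ <;>
      rcases abs_cases (betaFP vB a t) with ⟨e4, _⟩|⟨e4, _⟩ <;>
      linarith

lemma rho_ge_one' {δ Δ : ℝ} (hδ : 0 < δ) {vB : ℝ → ℝ} {a : ℕ → ℝ} {b : ℕ → Choice}
    (hB : IsDensity δ Δ vB)
    (ha : ∀ t : ℕ, 1 ≤ t → a t ∈ Set.Icc (0:ℝ) 1)
    (hfp : IsFictitiousPlay vB a b) :
    ∀ t : ℕ, 1 ≤ t → 1 ≤ rhoFP vB a b t := by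
  intro t
  induction t with
  | zero => intro h; exact absurd h (by omega)
  | succ n ih =>
    intro _
    rcases Nat.eq_zero_or_pos n with h0|h0
    · subst h0
      have hα : |alphaFP b 1| = 1 := by
        unfold alphaFP
        rw [Finset.Icc_self, Finset.sum_singleton]
        by_cases h : b 1 = Choice.R
        · rw [if_pos h]; norm_num
        · rw [if_neg h]; norm_num
      unfold rhoFP
      rw [hα]
      linarith [abs_nonneg (betaFP vB a 1)]
    · exact le_trans (ih h0) (rho_step' hδ hB ha hfp n)

end AuxFP

/-- Under fictitious play the radius `ρ` is non-decreasing: it is constant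
on non-axis-crossing rounds, increases by at most `2` per round, starts at `0`, and is at
least `1` from round `1` on. -/
theorem radius_monotone
    (δ Δ : ℝ) (hδ : 0 < δ) (hδΔ : δ ≤ Δ)
    (vA vB : ℝ → ℝ) (hA : IsDensity δ Δ vA) (hB : IsDensity δ Δ vB)
    (a : ℕ → ℝ) (b : ℕ → Choice)
    (ha : ∀ t : ℕ, 1 ≤ t → a t ∈ Set.Icc (0:ℝ) 1)
    (hfp : IsFictitiousPlay vB a b) (t : ℕ) :
    (¬ AxisCrossing vB a b t → rhoFP vB a b (t+1) = rhoFP vB a b t) ∧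
    (rhoFP vB a b t ≤ rhoFP vB a b (t+1) ∧ rhoFP vB a b (t+1) ≤ rhoFP vB a b t + 2) ∧
    rhoFP vB a b 0 = 0 ∧
    (1 ≤ t → 1 ≤ rhoFP vB a b t) := by
  
  refine ⟨rho_eq' hδ hB ha hfp t, ⟨rho_step' hδ hB ha hfp t, ?_⟩, ?_, rho_ge_one' hδ hB ha hfp t⟩
  · obtain ⟨hd1, hd2, _, _, _, _⟩ := step_data' hδ hB ha hfp t
    have hs : |if b (t+1) = Choice.R then (1:ℝ) else -1| ≤ 1 := by
      by_cases h : b (t+1) = Choice.R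
      · rw [if_pos h]; norm_num
      · rw [if_neg h]; norm_num
    have hd : |2 * cumul vB (a (t+1)) - 1| ≤ 1 := abs_le.mpr ⟨hd1, hd2⟩
    unfold rhoFP
    rw [alpha_succ' b t, beta_succ' vB a t]
    have h1 := abs_add_le (alphaFP b t) (if b (t+1) = Choice.R then (1:ℝ) else -1)
    have h2 := abs_add_le (betaFP vB a t) (2 * cumul vB (a (t+1)) - 1)
    linarith
  · simp [rhoFP, alphaFP, betaFP]
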